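/- Let N, M be positive integers, let H be an N×M complex matrix, ĥ ∈ ℂ^N, and let β be a real number with 0 < β ≤ 1. Define Z(μ) = (I − H Hᴴ (β⁻² μ I + H Hᴴ)⁻¹) H and Υ(μ) = diag(ĥ)ᴴ Z(μ) Z(μ)ᴴ diag(ĥ). Then for all real μ₁, μ₂ with 0 < μ₁ ≤ μ₂, the matrix Υ(μ₂) − Υ(μ₁) is positive semidefinite; in particular, for every θ ∈ ℂ^N, the quadratic form q_{Υ(μ)}(θ) = θᵀ Υ(μ) θ̄ is monotone nondecreasing in μ. -/

import Mathlib

open Matrix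
open scoped ComplexOrder

/-- `Z(μ) = (I − H Hᴴ (β⁻²μ I + H Hᴴ)⁻¹) H`. -/
noncomputable def Zmat {N M : ℕ} (H : Matrix (Fin N) (Fin M) ℂ) (β μ : ℝ) :
    Matrix (Fin N) (Fin M) ℂ :=
  ((1 : Matrix (Fin N) (Fin N) ℂ)
    - H * Hᴴ * (((((β : ℂ) ^ 2)⁻¹ * (μ : ℂ)) • 1 + H * Hᴴ)⁻¹)) * H

/-- `Υ(μ) = diag(ĥ)ᴴ Z(μ) Z(μ)ᴴ diag(ĥ)`. -/
noncomputable def Ups {N M : ℕ} (H : Matrix (Fin N) (Fin M) ℂ) (β μ : ℝ)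
    (hhat : Fin N → ℂ) : Matrix (Fin N) (Fin N) ℂ :=
  (Matrix.diagonal hhat)ᴴ * Zmat H β μ * (Zmat H β μ)ᴴ * Matrix.diagonal hhat

section aux
variable {n : ℕ}

private lemma smul_psd {c : ℝ} (hc : 0 ≤ c) {A : Matrix (Fin n) (Fin n) ℂ}
    (hA : A.PosSemidef) : ((c : ℂ) • A).PosSemidef := by
  refine PosSemidef.of_dotProduct_mulVec_nonneg ?_ (fun x => ?_)
  · show ((c:ℂ) • A)ᴴ = _
    rw [conjTranspose_smul, hA.1.eq]
    congr 1
    simp [Complex.star_def, Complex.conj_ofReal]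
  · rw [smul_mulVec, dotProduct_smul, smul_eq_mul]
    exact mul_nonneg (by exact_mod_cast hc) (hA.dotProduct_mulVec_nonneg x)

private lemma posDef_shift {A : Matrix (Fin n) (Fin n) ℂ} (hA : A.PosSemidef)
    {r : ℝ} (hr : 0 < r) :
    (((r : ℂ)) • (1 : Matrix (Fin n) (Fin n) ℂ) + A).PosDef := by
  rw [smul_one_eq_diagonal]
  exact (Matrix.PosDef.diagonal fun i => by exact_mod_cast hr).add_posSemidef hA

end aux

/-- `Υ(μ₂) − Υ(μ₁) ⪰ 0` for `0 < μ₁ ≤ μ₂`; in particular the quadratic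
form `θᵀ Υ(μ) θ̄` is monotone nondecreasing in `μ`. -/
theorem ups_monotone (N M : ℕ) (hN : 0 < N) (hM : 0 < M)
    (H : Matrix (Fin N) (Fin M) ℂ) (hhat : Fin N → ℂ) (β : ℝ)
    (hβ : 0 < β) (hβ1 : β ≤ 1) :
    ∀ μ₁ μ₂ : ℝ, 0 < μ₁ → μ₁ ≤ μ₂ →
      (Ups H β μ₂ hhat - Ups H β μ₁ hhat).PosSemidef ∧
      ∀ θ : Fin N → ℂ,
        (θ ⬝ᵥ (Ups H β μ₁ hhat *ᵥ star θ)).re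
          ≤ (θ ⬝ᵥ (Ups H β μ₂ hhat *ᵥ star θ)).re := by
  intro μ₁ μ₂ hμ₁ hle
  have hμ₂ : 0 < μ₂ := lt_of_lt_of_le hμ₁ hle
  set A : Matrix (Fin N) (Fin N) ℂ := H * Hᴴ with hAdef
  have hA : A.PosSemidef := posSemidef_self_mul_conjTranspose H
  have hβ2 : (0:ℝ) < (β^2)⁻¹ := by positivity
  set r₁ : ℝ := (β^2)⁻¹ * μ₁ with hr₁def
  set r₂ : ℝ := (β^2)⁻¹ * μ₂ with hr₂def
  have hr₁ : 0 < r₁ := by positivity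
  have hr₂ : 0 < r₂ := by positivity
  have hrle : r₁ ≤ r₂ := by
    apply mul_le_mul_of_nonneg_left hle hβ2.le
  have hcast : ∀ μ : ℝ, (((β:ℂ)^2)⁻¹ * (μ:ℂ)) = (((β^2)⁻¹ * μ : ℝ) : ℂ) := by
    intro μ; push_cast; ring
  -- the shifted matrices and their inverses
  set S₁ : Matrix (Fin N) (Fin N) ℂ := ((r₁:ℂ)) • 1 + A with hS₁def
  set S₂ : Matrix (Fin N) (Fin N) ℂ := ((r₂:ℂ)) • 1 + A with hS₂def
  have hS₁ : S₁.PosDef := posDef_shift hA hr₁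
  have hS₂ : S₂.PosDef := posDef_shift hA hr₂
  set B₁ : Matrix (Fin N) (Fin N) ℂ := S₁⁻¹ with hB₁def
  set B₂ : Matrix (Fin N) (Fin N) ℂ := S₂⁻¹ with hB₂def
  have hB₁ : B₁.PosDef := hS₁.inv
  have hB₂ : B₂.PosDef := hS₂.inv
  have hdet₁ : IsUnit S₁.det := (Matrix.isUnit_iff_isUnit_det S₁).mp hS₁.isUnit
  have hdet₂ : IsUnit S₂.det := (Matrix.isUnit_iff_isUnit_det S₂).mp hS₂.isUnit
  have hSB₁ : S₁ * B₁ = 1 := Matrix.mul_nonsing_inv S₁ hdet₁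
  have hSB₂ : S₂ * B₂ = 1 := Matrix.mul_nonsing_inv S₂ hdet₂
  have hBS₁ : B₁ * S₁ = 1 := Matrix.nonsing_inv_mul S₁ hdet₁
  have hBS₂ : B₂ * S₂ = 1 := Matrix.nonsing_inv_mul S₂ hdet₂
  -- commutation
  have hAS₁ : A * S₁ = S₁ * A := by rw [hS₁def]; noncomm_ring
  have hAS₂ : A * S₂ = S₂ * A := by rw [hS₂def]; noncomm_ring
  have hAB₁ : A * B₁ = B₁ * A := by
    calc A * B₁ = (B₁ * S₁) * (A * B₁) := by rw [hBS₁, Matrix.one_mul]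
    _ = B₁ * ((S₁ * A) * B₁) := by simp only [Matrix.mul_assoc]
    _ = B₁ * ((A * S₁) * B₁) := by rw [hAS₁]
    _ = (B₁ * A) * (S₁ * B₁) := by simp only [Matrix.mul_assoc]
    _ = B₁ * A := by rw [hSB₁, Matrix.mul_one]
  have hAB₂ : A * B₂ = B₂ * A := by
    calc A * B₂ = (B₂ * S₂) * (A * B₂) := by rw [hBS₂, Matrix.one_mul]
    _ = B₂ * ((S₂ * A) * B₂) := by simp only [Matrix.mul_assoc]
    _ = B₂ * ((A * S₂) * B₂) := by rw [hAS₂]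
    _ = (B₂ * A) * (S₂ * B₂) := by simp only [Matrix.mul_assoc]
    _ = B₂ * A := by rw [hSB₂, Matrix.mul_one]
  have hS₁S₂ : S₁ * S₂ = S₂ * S₁ := by
    rw [hS₁def, hS₂def]
    simp only [Matrix.add_mul, Matrix.mul_add, Matrix.smul_mul, Matrix.mul_smul,
      Matrix.one_mul, Matrix.mul_one, smul_add, smul_smul]
    rw [mul_comm ((r₁:ℝ):ℂ) ((r₂:ℝ):ℂ)]
    abel
  have hB₂B₁ : B₂ * B₁ = B₁ * B₂ := by
    rw [hB₁def, hB₂def, ← Matrix.mul_inv_rev, ← Matrix.mul_inv_rev, hS₁S₂]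
  -- resolvent identity
  set e : ℝ := r₂ - r₁ with hedef
  have he : 0 ≤ e := by simp [hedef, hrle]
  have hres : B₁ - B₂ = (e:ℂ) • (B₁ * B₂) := by
    have h1 : B₁ * S₂ * B₂ = B₁ := by rw [Matrix.mul_assoc, hSB₂, Matrix.mul_one]
    have h2 : B₁ * S₁ * B₂ = B₂ := by rw [hBS₁, Matrix.one_mul]
    have h3 : S₂ = S₁ + (e:ℂ) • 1 := by
      rw [hS₁def, hS₂def, hedef]
      push_cast
      module
    calc B₁ - B₂ = B₁ * S₂ * B₂ - B₁ * S₁ * B₂ := by rw [h1, h2]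
    _ = B₁ * ((e:ℂ) • 1) * B₂ := by rw [h3]; noncomm_ring
    _ = (e:ℂ) • (B₁ * B₂) := by
        rw [Matrix.mul_smul, Matrix.mul_one, Matrix.smul_mul]
  -- Z identity
  set P₁ : Matrix (Fin N) (Fin N) ℂ := (r₁:ℂ) • B₁ with hP₁def
  set P₂ : Matrix (Fin N) (Fin N) ℂ := (r₂:ℂ) • B₂ with hP₂def
  have hP₁' : (1 : Matrix (Fin N) (Fin N) ℂ) - A * B₁ = P₁ := by
    have := hSB₁
    rw [hS₁def, Matrix.add_mul, Matrix.smul_mul, Matrix.one_mul] at this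
    rw [hP₁def, eq_comm, eq_sub_iff_add_eq]
    exact this
  have hP₂' : (1 : Matrix (Fin N) (Fin N) ℂ) - A * B₂ = P₂ := by
    have := hSB₂
    rw [hS₂def, Matrix.add_mul, Matrix.smul_mul, Matrix.one_mul] at this
    rw [hP₂def, eq_comm, eq_sub_iff_add_eq]
    exact this
  have hZ₁ : Zmat H β μ₁ = P₁ * H := by
    rw [Zmat, hcast μ₁, ← hr₁def, ← hAdef, ← hS₁def, ← hB₁def, hP₁']
  have hZ₂ : Zmat H β μ₂ = P₂ * H := by
    rw [Zmat, hcast μ₂, ← hr₂def, ← hAdef, ← hS₂def, ← hB₂def, hP₂']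
  -- Ups identity
  set D : Matrix (Fin N) (Fin N) ℂ := Matrix.diagonal hhat with hDdef
  have hPH₁ : P₁ᴴ = P₁ := by
    rw [hP₁def, conjTranspose_smul, hB₁.1.eq]
    congr 1
    simp [Complex.star_def, Complex.conj_ofReal]
  have hPH₂ : P₂ᴴ = P₂ := by
    rw [hP₂def, conjTranspose_smul, hB₂.1.eq]
    congr 1
    simp [Complex.star_def, Complex.conj_ofReal]
  have hU₁ : Ups H β μ₁ hhat = Dᴴ * (P₁ * A * P₁) * D := by
    rw [Ups, hZ₁, conjTranspose_mul, hPH₁, ← hDdef]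
    rw [hAdef]
    simp only [Matrix.mul_assoc]
  have hU₂ : Ups H β μ₂ hhat = Dᴴ * (P₂ * A * P₂) * D := by
    rw [Ups, hZ₂, conjTranspose_mul, hPH₂, ← hDdef]
    rw [hAdef]
    simp only [Matrix.mul_assoc]
  -- difference decomposition
  have hPdiff : P₂ - P₁ = (e:ℂ) • (A * (B₁ * B₂)) := by
    rw [← hP₁', ← hP₂', ← Matrix.mul_smul, ← hres]
    rw [Matrix.mul_sub]
    abel
  have hX : P₂ * A * P₂ - P₁ * A * P₁
      = (P₂ - P₁) * A * P₂ + P₁ * A * (P₂ - P₁) := by noncomm_ring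
  have hcomm1 : ∀ X : Matrix (Fin N) (Fin N) ℂ, A * (B₁ * X) = B₁ * (A * X) := fun X => by
    rw [← Matrix.mul_assoc, hAB₁, Matrix.mul_assoc]
  have hcomm2 : ∀ X : Matrix (Fin N) (Fin N) ℂ, A * (B₂ * X) = B₂ * (A * X) := fun X => by
    rw [← Matrix.mul_assoc, hAB₂, Matrix.mul_assoc]
  have hcomm3 : ∀ X : Matrix (Fin N) (Fin N) ℂ, B₂ * (B₁ * X) = B₁ * (B₂ * X) := fun X => by
    rw [← Matrix.mul_assoc, hB₂B₁, Matrix.mul_assoc]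
  have hdiff : Ups H β μ₂ hhat - Ups H β μ₁ hhat
      = ((e * r₂ : ℝ):ℂ) • ((B₂ * A * D)ᴴ * B₁ * (B₂ * A * D))
        + ((e * r₁ : ℝ):ℂ) • ((B₁ * A * D)ᴴ * B₂ * (B₁ * A * D)) := by
    rw [hU₁, hU₂, ← Matrix.sub_mul, ← Matrix.mul_sub, hX, hPdiff, hP₁def, hP₂def]
    push_cast
    simp only [conjTranspose_mul, hA.1.eq, hB₁.1.eq, hB₂.1.eq,
      Matrix.smul_mul, Matrix.mul_smul, smul_smul, Matrix.mul_add, Matrix.add_mul,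
      smul_add, Matrix.mul_assoc, hcomm1, hcomm2, hcomm3, mul_comm]
  have psd1 : ((B₂ * A * D)ᴴ * B₁ * (B₂ * A * D)).PosSemidef :=
    hB₁.posSemidef.conjTranspose_mul_mul_same (B₂ * A * D)
  have psd2 : ((B₁ * A * D)ᴴ * B₂ * (B₁ * A * D)).PosSemidef :=
    hB₂.posSemidef.conjTranspose_mul_mul_same (B₁ * A * D)
  have hpsd : (Ups H β μ₂ hhat - Ups H β μ₁ hhat).PosSemidef := by
    rw [hdiff]
    exact (smul_psd (mul_nonneg he hr₂.le) psd1).add (smul_psd (mul_nonneg he hr₁.le) psd2)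
  refine ⟨hpsd, fun θ => ?_⟩
  have h0 := hpsd.dotProduct_mulVec_nonneg (star θ)
  rw [star_star, Matrix.sub_mulVec, dotProduct_sub] at h0
  have h1 := (Complex.le_def.mp h0).1
  simp only [Complex.sub_re, Complex.zero_re] at h1
  linarith
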